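/- For every integer n > 1 and real m ≥ 1, one has ∑_{i=0}^{n-1} 1/((n-i)(m+n-i)) ≤ log(1+m)/m + 1/(m+1). -/

import Mathlib

open Finset Real

lemma key (m a : ℝ) (hm : 1 ≤ m) (ha : 1 ≤ a) :
    1 / ((a+1)*(m+a+1)) ≤
      ((Real.log (a+1) - Real.log (m+a+1)) - (Real.log a - Real.log (m+a)))/m := by
  have h0 : (0:ℝ) < a := by linarith
  have h1 : (0:ℝ) < a + 1 := by linarith
  have h2 : (0:ℝ) < m + a := by linarith
  have h3 : (0:ℝ) < m + a + 1 := by linarith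
  have hm0 : (0:ℝ) < m := by linarith
  set r : ℝ := ((a+1)*(m+a))/(a*(m+a+1)) with hr
  have hrpos : 0 < r := by positivity
  have hlogr : 1 - 1/r ≤ Real.log r := by
    have := Real.log_le_sub_one_of_pos (x := 1/r) (by positivity)
    rw [Real.log_div one_ne_zero (ne_of_gt hrpos), Real.log_one] at this
    linarith
  have hlr : Real.log r = (Real.log (a+1) - Real.log (m+a+1)) - (Real.log a - Real.log (m+a)) := by
    rw [hr, Real.log_div (by positivity) (by positivity),
      Real.log_mul (by positivity) (by positivity),
      Real.log_mul (by positivity) (by positivity)]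
    ring
  have hinv : 1 - 1/r = m/((a+1)*(m+a)) := by
    rw [hr]
    field_simp
    ring
  have hfrac : 1 / ((a+1)*(m+a+1)) ≤ (1 - 1/r)/m := by
    rw [hinv]
    have he : (m/((a+1)*(m+a)))/m = 1/((a+1)*(m+a)) := by
      field_simp
    rw [he]
    exact one_div_le_one_div_of_le (by positivity) (by nlinarith)
  calc 1 / ((a+1)*(m+a+1)) ≤ (1 - 1/r)/m := hfrac
    _ ≤ (Real.log r)/m := by gcongr
    _ = _ := by rw [hlr]

theorem stmt_4 (n : ℕ) (hn : 1 < n) (m : ℝ) (hm : 1 ≤ m) :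
    ∑ i ∈ Finset.range n, 1 / (((n : ℝ) - i) * (m + (n : ℝ) - i)) ≤
      Real.log (1 + m) / m + 1 / (m + 1) := by
  have hm0 : (0:ℝ) < m := by linarith
  obtain ⟨k, rfl⟩ : ∃ k, n = k + 1 := ⟨n - 1, by omega⟩
  have hk : 1 ≤ k := by omega
  have hsum : ∑ i ∈ Finset.range (k+1), 1 / ((((k+1:ℕ) : ℝ) - i) * (m + ((k+1:ℕ) : ℝ) - i)) =
      ∑ j ∈ Finset.range (k+1), 1 / (((j:ℝ)+1) * (m + j + 1)) := by
    rw [← Finset.sum_range_reflect]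
    apply Finset.sum_congr rfl
    intro j hj
    have hj' := Finset.mem_range.mp hj
    have hc : ((k + 1 - 1 - j : ℕ) : ℝ) = (k:ℝ) - j := by
      have : k + 1 - 1 - j = k - j := by omega
      rw [this, Nat.cast_sub (by omega)]
    rw [hc]
    push_cast
    ring_nf
  rw [hsum, Finset.sum_range_succ']
  have h0 : 1 / (((0:ℕ):ℝ)+1) * (1 / (m + 0 + 1)) = 1/(m+1) := by norm_num
  have hlast : 1 / ((((0:ℕ):ℝ)+1) * (m + ((0:ℕ):ℝ) + 1)) = 1/(m+1) := by norm_num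
  rw [hlast]
  gcongr ?_ + _
  set F : ℕ → ℝ := fun i => (Real.log ((i:ℝ)+1) - Real.log (m+(i:ℝ)+1))/m with hF
  calc ∑ i ∈ Finset.range k, 1 / ((((i+1:ℕ):ℝ)+1) * (m + ((i+1:ℕ):ℝ) + 1))
      ≤ ∑ i ∈ Finset.range k, (F (i+1) - F i) := by
        apply Finset.sum_le_sum
        intro i _
        have hkey := key m ((i:ℝ)+1) hm (by linarith [Nat.cast_nonneg (α:=ℝ) i])
        have e1 : 1 / ((((i+1:ℕ):ℝ)+1) * (m + ((i+1:ℕ):ℝ) + 1))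
            = 1 / (((i:ℝ)+1+1)*(m+((i:ℝ)+1)+1)) := by push_cast; ring_nf
        have e2 : F (i+1) - F i
            = ((Real.log (((i:ℝ)+1)+1) - Real.log (m+((i:ℝ)+1)+1))
              - (Real.log ((i:ℝ)+1) - Real.log (m+((i:ℝ)+1))))/m := by
          simp only [hF]; push_cast; ring
        rw [e1, e2]; exact hkey
    _ = F k - F 0 := Finset.sum_range_sub F k
    _ ≤ Real.log (1 + m) / m := by
        simp only [hF, Nat.cast_zero]
        have h1 : Real.log ((k:ℝ)+1) ≤ Real.log (m+(k:ℝ)+1) := by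
          apply Real.log_le_log (by positivity); linarith
        have h2 : Real.log ((0:ℝ)+1) = 0 := by norm_num
        have h3 : m + (0:ℝ) + 1 = 1 + m := by ring
        rw [h2, h3]
        rw [div_sub_div_same, div_le_div_iff_of_pos_right hm0]
        linarith
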